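/- There exist a ∈ (0,1), a constant C₂ ∈ (0,∞) (depending on Λ and a), and an integer b₀ such that for all b ≥ b₀: γ_b^a ≤ γ_b ≤ C₂ γ_b^a. -/

import Mathlib

open MeasureTheory Finset Filter

/-- `lamBK μ b k` is `λ_{b,k} = ∫_{[0,1]} x^{k-2} (1-x)^{b-k} dΛ(x)`. -/
noncomputable def lamBK (μ : Measure ℝ) (b k : ℕ) : ℝ :=
  ∫ x in Set.Icc (0:ℝ) 1, x ^ (k - 2) * (1 - x) ^ (b - k) ∂μ

/-- `lamB μ b` is `λ_b = Σ_{k=2}^b C(b,k) λ_{b,k}`. -/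
noncomputable def lamB (μ : Measure ℝ) (b : ℕ) : ℝ :=
  ∑ k ∈ Finset.Icc 2 b, (b.choose k : ℝ) * lamBK μ b k

/-- `gamB μ b` is `γ_b = Σ_{k=2}^b C(b,k) (k-1) λ_{b,k}`. -/
noncomputable def gamB (μ : Measure ℝ) (b : ℕ) : ℝ :=
  ∑ k ∈ Finset.Icc 2 b, (b.choose k : ℝ) * ((k : ℝ) - 1) * lamBK μ b k

private lemma sum_bern (b : ℕ) (x : ℝ) :
    ∑ k ∈ Finset.range (b+1), (b.choose k : ℝ) * (x ^ k * (1-x) ^ (b-k)) = 1 := by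
  calc ∑ k ∈ Finset.range (b+1), (b.choose k : ℝ) * (x ^ k * (1-x) ^ (b-k))
      = (x + (1-x))^b := by
        rw [add_pow]; exact Finset.sum_congr rfl fun k _ => by ring
    _ = 1 := by rw [add_sub_cancel, one_pow]

private lemma sum_k_bern (b : ℕ) (x : ℝ) :
    ∑ k ∈ Finset.range (b+1), (k : ℝ) * (b.choose k : ℝ) * (x ^ k * (1-x) ^ (b-k)) = b * x := by
  cases b with
  | zero => simp
  | succ m =>
    rw [Finset.sum_range_succ']
    have step : ∀ j ∈ Finset.range (m+1),
        ((j+1 : ℕ) : ℝ) * ((m+1).choose (j+1) : ℝ) * (x ^ (j+1) * (1-x) ^ (m+1-(j+1))) =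
        (((m:ℝ)+1) * x) * ((m.choose j : ℝ) * (x ^ j * (1-x) ^ (m-j))) := by
      intro j _
      have h := Nat.add_one_mul_choose_eq m j
      have h' : ((m:ℝ)+1) * (m.choose j : ℝ) = ((m+1).choose (j+1) : ℝ) * ((j:ℝ)+1) := by
        exact_mod_cast congrArg (Nat.cast (R := ℝ)) h
      rw [Nat.succ_sub_succ, pow_succ]
      push_cast
      linear_combination -(x ^ j * x * (1-x) ^ (m-j)) * h'
    rw [Finset.sum_congr rfl step]
    push_cast
    rw [← Finset.mul_sum, sum_bern m x]
    ring

private lemma range_split (b : ℕ) (hb : 2 ≤ b) :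
    Finset.range (b+1) = insert 0 (insert 1 (Finset.Icc 2 b)) := by
  ext k; simp only [Finset.mem_range, Finset.mem_insert, Finset.mem_Icc]; omega

private lemma sum_km1_bern (b : ℕ) (hb : 2 ≤ b) (x : ℝ) :
    ∑ k ∈ Finset.Icc 2 b, (b.choose k : ℝ) * ((k:ℝ)-1) * (x ^ k * (1-x) ^ (b-k))
      = b * x - 1 + (1-x)^b := by
  have key : ∑ k ∈ Finset.range (b+1), (b.choose k : ℝ) * ((k:ℝ)-1) * (x ^ k * (1-x) ^ (b-k))
      = b * x - 1 := by
    have h1 := sum_bern b x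
    have h2 := sum_k_bern b x
    calc ∑ k ∈ Finset.range (b+1), (b.choose k : ℝ) * ((k:ℝ)-1) * (x ^ k * (1-x) ^ (b-k))
        = ∑ k ∈ Finset.range (b+1), ((k : ℝ) * (b.choose k : ℝ) * (x ^ k * (1-x) ^ (b-k))
            - (b.choose k : ℝ) * (x ^ k * (1-x) ^ (b-k))) := by
          exact Finset.sum_congr rfl fun k _ => by ring
      _ = b * x - 1 := by rw [Finset.sum_sub_distrib, h1, h2]
  rw [range_split b hb] at key
  rw [Finset.sum_insert (by simp), Finset.sum_insert (by simp [Finset.mem_Icc])] at key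
  simp only [Nat.cast_zero, Nat.cast_one, Nat.choose_zero_right, Nat.choose_one_right,
    pow_zero, Nat.sub_zero, one_mul] at key
  linarith [key]

private lemma g_lower (b : ℕ) (hb : 2 ≤ b) (x : ℝ) (hx0 : 0 ≤ x) (hx1 : x ≤ 1) :
    b * x - 1 ≤ ∑ k ∈ Finset.Icc 2 b,
      (b.choose k : ℝ) * ((k:ℝ)-1) * (x ^ (k-2) * (1-x) ^ (b-k)) := by
  have h1 : b * x - 1
      ≤ ∑ k ∈ Finset.Icc 2 b, (b.choose k : ℝ) * ((k:ℝ)-1) * (x ^ k * (1-x) ^ (b-k)) := by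
    rw [sum_km1_bern b hb x]
    have : (0:ℝ) ≤ (1-x)^b := pow_nonneg (by linarith) b
    linarith
  refine h1.trans (Finset.sum_le_sum fun k hk => ?_)
  rw [Finset.mem_Icc] at hk
  have h2 : (2:ℝ) ≤ (k:ℝ) := by exact_mod_cast hk.1
  have hc : (0:ℝ) ≤ (b.choose k : ℝ) * ((k:ℝ)-1) :=
    mul_nonneg (Nat.cast_nonneg _) (by linarith)
  refine mul_le_mul_of_nonneg_left ?_ hc
  refine mul_le_mul_of_nonneg_right ?_ (pow_nonneg (by linarith) _)
  exact pow_le_pow_of_le_one hx0 hx1 (Nat.sub_le k 2)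

private lemma g_nonneg (b : ℕ) (x : ℝ) (hx0 : 0 ≤ x) (hx1 : x ≤ 1) :
    0 ≤ ∑ k ∈ Finset.Icc 2 b, (b.choose k : ℝ) * ((k:ℝ)-1) * (x ^ (k-2) * (1-x) ^ (b-k)) := by
  refine Finset.sum_nonneg fun k hk => ?_
  rw [Finset.mem_Icc] at hk
  have h2 : (2:ℝ) ≤ (k:ℝ) := by exact_mod_cast hk.1
  have h3 : (0:ℝ) ≤ 1 - x := by linarith
  exact mul_nonneg (mul_nonneg (Nat.cast_nonneg _) (by linarith))
    (mul_nonneg (pow_nonneg hx0 _) (pow_nonneg h3 _))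

private lemma g_upper (b : ℕ) (a x : ℝ) (ha : 0 < a) (hax : a ≤ x) (hx1 : x ≤ 1) :
    ∑ k ∈ Finset.Icc 2 b, (b.choose k : ℝ) * ((k:ℝ)-1) * (x ^ (k-2) * (1-x) ^ (b-k))
      ≤ b / a^2 := by
  have hx0 : (0:ℝ) < x := lt_of_lt_of_le ha hax
  have step : ∀ k ∈ Finset.Icc 2 b,
      (b.choose k : ℝ) * ((k:ℝ)-1) * (x ^ (k-2) * (1-x) ^ (b-k))
        ≤ ((b:ℝ) / a^2) * ((b.choose k : ℝ) * (x ^ k * (1-x) ^ (b-k))) := by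
    intro k hk
    rw [Finset.mem_Icc] at hk
    have hkb : ((k:ℝ)-1) ≤ (b:ℝ) := by
      have : (k:ℝ) ≤ (b:ℝ) := by exact_mod_cast hk.2
      linarith
    have hpow : x ^ (k-2) ≤ x ^ k / a^2 := by
      rw [le_div_iff₀ (by positivity : (0:ℝ) < a^2)]
      calc x ^ (k-2) * a^2 ≤ x ^ (k-2) * x^2 := by
            refine mul_le_mul_of_nonneg_left ?_ (pow_nonneg hx0.le _)
            exact pow_le_pow_left₀ ha.le hax 2
        _ = x ^ k := by rw [← pow_add]; congr 1; omega
    have h2 : (2:ℝ) ≤ (k:ℝ) := by exact_mod_cast hk.1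
    have h1x : (0:ℝ) ≤ (1-x)^(b-k) := pow_nonneg (by linarith) _
    calc (b.choose k : ℝ) * ((k:ℝ)-1) * (x ^ (k-2) * (1-x) ^ (b-k))
        ≤ (b.choose k : ℝ) * (b:ℝ) * ((x ^ k / a^2) * (1-x) ^ (b-k)) := by
          refine mul_le_mul (mul_le_mul_of_nonneg_left hkb (Nat.cast_nonneg _)) ?_ ?_ ?_
          · exact mul_le_mul_of_nonneg_right hpow h1x
          · exact mul_nonneg (pow_nonneg hx0.le _) h1x
          · positivity
      _ = ((b:ℝ) / a^2) * ((b.choose k : ℝ) * (x ^ k * (1-x) ^ (b-k))) := by ring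
  refine (Finset.sum_le_sum step).trans ?_
  rw [← Finset.mul_sum]
  have hsub : Finset.Icc 2 b ⊆ Finset.range (b+1) := by
    intro k hk; rw [Finset.mem_Icc] at hk; rw [Finset.mem_range]; omega
  have hle : ∑ k ∈ Finset.Icc 2 b, (b.choose k : ℝ) * (x ^ k * (1-x) ^ (b-k))
      ≤ ∑ k ∈ Finset.range (b+1), (b.choose k : ℝ) * (x ^ k * (1-x) ^ (b-k)) := by
    refine Finset.sum_le_sum_of_subset_of_nonneg hsub fun k _ _ => ?_
    have h1x : (0:ℝ) ≤ (1-x) := by linarith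
    positivity
  rw [sum_bern b x] at hle
  calc ((b:ℝ) / a^2) * ∑ k ∈ Finset.Icc 2 b, (b.choose k : ℝ) * (x ^ k * (1-x) ^ (b-k))
      ≤ ((b:ℝ) / a^2) * 1 := mul_le_mul_of_nonneg_left hle (by positivity)
    _ = b / a^2 := by ring

private lemma intOn (μ : Measure ℝ) [IsFiniteMeasure μ] (b k : ℕ) :
    IntegrableOn (fun x : ℝ => x ^ (k-2) * (1-x) ^ (b-k)) (Set.Icc (0:ℝ) 1) μ := by
  apply Continuous.integrableOn_Icc
  continuity

private lemma gamB_eq (μ : Measure ℝ) [IsFiniteMeasure μ] (b : ℕ) :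
    gamB μ b = ∫ x in Set.Icc (0:ℝ) 1,
      (∑ k ∈ Finset.Icc 2 b, (b.choose k : ℝ) * ((k:ℝ)-1) * (x ^ (k-2) * (1-x) ^ (b-k))) ∂μ := by
  rw [integral_finset_sum _ (fun k _ => ((intOn μ b k).const_mul _))]
  exact Finset.sum_congr rfl fun k _ => (integral_const_mul _ _).symm

private lemma exists_mass : ∀ (μ : Measure ℝ) [IsFiniteMeasure μ],
    μ {0} = 0 → μ {1} = 0 → 0 < μ (Set.Icc (0:ℝ) 1) →
    ∃ c d : ℝ, 0 < c ∧ c ≤ d ∧ d < 1 ∧ 0 < μ (Set.Icc c d) := by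
  intro μ _ h0 h1 hpos
  have hIoo : 0 < μ (Set.Ioo (0:ℝ) 1) := by
    by_contra h
    push_neg at h
    have hIoo0 : μ (Set.Ioo (0:ℝ) 1) = 0 := le_antisymm h zero_le
    have hsub : Set.Icc (0:ℝ) 1 ⊆ ({0} ∪ Set.Ioo 0 1) ∪ {1} := by
      intro x hx
      rcases eq_or_lt_of_le hx.1 with h | h
      · exact Or.inl (Or.inl (by simp [← h]))
      rcases eq_or_lt_of_le hx.2 with h' | h'
      · exact Or.inr (by simp [h'])
      · exact Or.inl (Or.inr ⟨h, h'⟩)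
    have hA : μ (Set.Icc (0:ℝ) 1) ≤ μ (({0} ∪ Set.Ioo 0 1) ∪ {1}) := measure_mono hsub
    have hB : μ (({0} ∪ Set.Ioo (0:ℝ) 1) ∪ {1}) ≤ μ ({0} ∪ Set.Ioo 0 1) + μ {1} :=
      measure_union_le _ _
    have hC : μ ({0} ∪ Set.Ioo (0:ℝ) 1) ≤ μ {0} + μ (Set.Ioo 0 1) := measure_union_le _ _
    have hfin : μ (Set.Icc (0:ℝ) 1) ≤ 0 := by
      calc μ (Set.Icc (0:ℝ) 1) ≤ μ ({0} ∪ Set.Ioo 0 1) + μ {1} := hA.trans hB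
        _ ≤ (μ {0} + μ (Set.Ioo 0 1)) + μ {1} := add_le_add_left hC _
        _ = 0 := by rw [h0, h1, hIoo0]; simp
    exact hpos.not_ge hfin
  have hcover : Set.Ioo (0:ℝ) 1 ⊆ ⋃ n : ℕ, Set.Icc (1/(n+1) : ℝ) (1 - 1/(n+1)) := by
    intro x hx
    obtain ⟨n, hn⟩ := exists_nat_one_div_lt (lt_min hx.1 (by linarith [hx.2] : (0:ℝ) < 1 - x))
    refine Set.mem_iUnion.2 ⟨n, ?_, ?_⟩
    · exact le_of_lt (lt_of_lt_of_le hn (min_le_left _ _))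
    · have := lt_of_lt_of_le hn (min_le_right _ _); linarith
  have hex : ∃ n : ℕ, μ (Set.Icc (1/(n+1) : ℝ) (1 - 1/(n+1))) ≠ 0 := by
    by_contra h
    push_neg at h
    have hU : μ (⋃ n : ℕ, Set.Icc (1/(n+1) : ℝ) (1 - 1/(n+1))) = 0 := measure_iUnion_null h
    exact hIoo.ne' (le_antisymm ((measure_mono hcover).trans hU.le) zero_le)
  obtain ⟨n, hn⟩ := hex
  set c : ℝ := 1/(n+1) with hcdef
  set d : ℝ := 1 - 1/(n+1) with hddef
  have hc : 0 < c := by positivity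
  have hpos' : 0 < μ (Set.Icc c d) := (zero_le : (0:ENNReal) ≤ μ (Set.Icc c d)).lt_of_ne (Ne.symm hn)
  have hcd : c ≤ d := by
    by_contra hlt
    push_neg at hlt
    rw [Set.Icc_eq_empty (not_le.2 hlt), measure_empty] at hpos'
    exact lt_irrefl _ hpos'
  exact ⟨c, d, hc, hcd, by rw [hddef]; linarith, hpos'⟩

theorem gamB_restrict_comparable (μ : Measure ℝ) [IsFiniteMeasure μ]
    (h0 : μ {0} = 0) (h1 : μ {1} = 0)
    (hsupp : μ ((Set.Icc (0:ℝ) 1)ᶜ) = 0) (hpos : 0 < μ (Set.Icc (0:ℝ) 1)) :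
    ∃ a : ℝ, a ∈ Set.Ioo (0:ℝ) 1 ∧ ∃ C₂ : ℝ, 0 < C₂ ∧ ∃ b₀ : ℕ, ∀ b : ℕ, b₀ ≤ b →
      gamB (μ.restrict (Set.Icc 0 a)) b ≤ gamB μ b ∧
        gamB μ b ≤ C₂ * gamB (μ.restrict (Set.Icc 0 a)) b := by
  obtain ⟨c, d, hc, hcd, hd1, hmass⟩ := exists_mass μ h0 h1 hpos
  have hd0 : 0 < d := hc.trans_le hcd
  set m : ℝ := (μ (Set.Icc c d)).toReal with hmdef
  have hm0 : 0 < m := ENNReal.toReal_pos hmass.ne' (measure_ne_top μ _)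
  set M : ℝ := (μ Set.univ).toReal with hMdef
  have hM0 : 0 ≤ M := ENNReal.toReal_nonneg
  refine ⟨d, ⟨hd0, hd1⟩, 1 + 2*M/(d^2*c*m), by positivity, max 2 ⌈(2:ℝ)/c⌉₊, fun b hb => ?_⟩
  have hb2 : 2 ≤ b := le_trans (le_max_left _ _) hb
  have hbc : 2 ≤ (b:ℝ) * c := by
    have h := le_trans (le_max_right _ _) hb
    have h' : (2:ℝ)/c ≤ (b:ℝ) := by exact_mod_cast Nat.ceil_le.1 h
    rw [div_le_iff₀ hc] at h'
    linarith
  -- the integrand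
  set G : ℝ → ℝ := fun x =>
    ∑ k ∈ Finset.Icc 2 b, (b.choose k : ℝ) * ((k:ℝ)-1) * (x ^ (k-2) * (1-x) ^ (b-k)) with hGdef
  have hGcont : Continuous G := by
    apply continuous_finset_sum
    intro k _
    continuity
  have hGint : IntegrableOn G (Set.Icc (0:ℝ) 1) μ := hGcont.integrableOn_Icc
  have hIcc0d_sub : Set.Icc (0:ℝ) d ⊆ Set.Icc 0 1 := Set.Icc_subset_Icc le_rfl hd1.le
  have hIoc_sub : Set.Ioc d 1 ⊆ Set.Icc (0:ℝ) 1 := fun x hx => ⟨(hd0.trans hx.1).le, hx.2⟩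
  have hIcd_sub : Set.Icc c d ⊆ Set.Icc (0:ℝ) d := Set.Icc_subset_Icc hc.le le_rfl
  have hGnn : ∀ x ∈ Set.Icc (0:ℝ) 1, 0 ≤ G x := fun x hx => g_nonneg b x hx.1 hx.2
  have hrestr : gamB (μ.restrict (Set.Icc 0 d)) b = ∫ x in Set.Icc (0:ℝ) d, G x ∂μ := by
    rw [gamB_eq, Measure.restrict_restrict measurableSet_Icc, Set.Icc_inter_Icc]
    simp [min_eq_right hd1.le]
    rfl
  have hdisj : Disjoint (Set.Icc (0:ℝ) d) (Set.Ioc d 1) :=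
    Set.disjoint_left.mpr fun x hx hx' => absurd hx.2 (not_le.2 hx'.1)
  have hfull : gamB μ b = (∫ x in Set.Icc (0:ℝ) d, G x ∂μ) + ∫ x in Set.Ioc d 1, G x ∂μ := by
    rw [gamB_eq, ← Set.Icc_union_Ioc_eq_Icc hd0.le hd1.le]
    exact setIntegral_union hdisj measurableSet_Ioc (hGint.mono_set hIcc0d_sub)
      (hGint.mono_set hIoc_sub)
  set R : ℝ := ∫ x in Set.Icc (0:ℝ) d, G x ∂μ with hRdef
  set T : ℝ := ∫ x in Set.Ioc d 1, G x ∂μ with hTdef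
  have hT0 : 0 ≤ T :=
    setIntegral_nonneg measurableSet_Ioc (fun x hx => hGnn x (hIoc_sub hx))
  have hT : T ≤ M * ((b:ℝ)/d^2) := by
    have h1 : T ≤ ∫ _ in Set.Ioc d 1, ((b:ℝ)/d^2) ∂μ := by
      refine setIntegral_mono_on (hGint.mono_set hIoc_sub)
        integrableOn_const measurableSet_Ioc
        (fun x hx => ?_)
      exact g_upper b d x hd0 hx.1.le hx.2
    rw [setIntegral_const, smul_eq_mul] at h1
    refine h1.trans (mul_le_mul_of_nonneg_right ?_ (by positivity))
    exact ENNReal.toReal_le_toReal (measure_ne_top _ _) (measure_ne_top _ _) |>.2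
      (measure_mono (Set.subset_univ _))
  have hlow : ((b:ℝ)*c - 1) * m ≤ R := by
    have h1 : ∫ _ in Set.Icc c d, ((b:ℝ)*c - 1) ∂μ ≤ ∫ x in Set.Icc c d, G x ∂μ := by
      refine setIntegral_mono_on integrableOn_const
        (hGint.mono_set (hIcd_sub.trans hIcc0d_sub)) measurableSet_Icc (fun x hx => ?_)
      have hxc : c ≤ x := hx.1
      have hx1 : x ≤ 1 := hx.2.trans hd1.le
      have := g_lower b hb2 x (hc.le.trans hxc) hx1
      have hbx : (b:ℝ)*c ≤ (b:ℝ)*x :=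
        mul_le_mul_of_nonneg_left hxc (Nat.cast_nonneg _)
      rw [hGdef]
      dsimp only
      linarith
    have h2 : ∫ x in Set.Icc c d, G x ∂μ ≤ R := by
      refine setIntegral_mono_set (hGint.mono_set hIcc0d_sub) ?_
        (HasSubset.Subset.eventuallyLE hIcd_sub)
      exact (ae_restrict_iff' measurableSet_Icc).2
        (Filter.Eventually.of_forall fun x hx => hGnn x (hIcc0d_sub hx))
    rw [setIntegral_const, smul_eq_mul] at h1
    change m * ((b:ℝ)*c - 1) ≤ _ at h1
    nlinarith [h1, h2]
  -- final arithmetic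
  have hRlow : ((b:ℝ)*c/2) * m ≤ R := by
    refine le_trans (mul_le_mul_of_nonneg_right (by linarith) hm0.le) hlow
  constructor
  · rw [hrestr, hfull]; linarith
  · rw [hrestr, hfull]
    have key : (2*M/(d^2*c*m)) * (((b:ℝ)*c/2) * m) = M*((b:ℝ)/d^2) := by
      field_simp
    have h3 : (2*M/(d^2*c*m)) * (((b:ℝ)*c/2) * m) ≤ (2*M/(d^2*c*m)) * R :=
      mul_le_mul_of_nonneg_left hRlow (by positivity)
    rw [key] at h3
    have : T ≤ (2*M/(d^2*c*m)) * R := hT.trans h3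
    nlinarith [this]
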